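/- Let T̃ : E ×_η G → F be the integrated form T̃(l) = ∫_G T(l(s)) u_s ds of a (u',u)-covariant τ-map T : E → F with respect to (G,η,E). Then T̃ is (u',u)-covariant in the crossed-product sense: T̃(η_t ∘ m^l_t) = u'_t T̃(m) and T̃(m^r_t) = T̃(m) u_t for all t ∈ G and m ∈ C_c(G,E), where m^l_t(s) = m(t⁻¹s) and m^r_t(s) = Δ(t)⁻¹ m(s t⁻¹) with Δ the modular function of G. -/

import Mathlib

/-- A (pre-)inner-product module over a C*-algebra `A`: a complex vector space `E`
with a right `A`-action and an `A`-valued inner product, conjugate-linear in the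
first variable. -/
structure PreHilbertMod (A : Type*) (E : Type*)
    [NormedRing A] [StarRing A] [PartialOrder A]
    [NormedAlgebra ℂ A] [AddCommGroup E] [Module ℂ E] where
  smul : E → A → E
  inner : E → E → A
  smul_smul : ∀ (x : E) (a b : A), smul (smul x a) b = smul x (a * b)
  smul_add_right : ∀ (x : E) (a b : A), smul x (a + b) = smul x a + smul x b
  add_smul_left : ∀ (x y : E) (a : A), smul (x + y) a = smul x a + smul y a
  smulC_left : ∀ (α : ℂ) (x : E) (a : A), smul (α • x) a = α • smul x a
  smulC_right : ∀ (α : ℂ) (x : E) (a : A), smul x (α • a) = α • smul x a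
  inner_nonneg : ∀ x : E, 0 ≤ inner x x
  inner_definite : ∀ x : E, inner x x = 0 → x = 0
  inner_smul_right : ∀ (x y : E) (a : A), inner x (smul y a) = inner x y * a
  inner_conj : ∀ x y : E, inner x y = star (inner y x)
  inner_add_right : ∀ x y z : E, inner x (y + z) = inner x y + inner x z
  inner_smulC_right : ∀ (x y : E) (μ : ℂ), inner x (μ • y) = μ • inner x y

open MeasureTheory

/-- the integrated form `T̃(l) = ∫ T(l(s)) u_s ds` of a
`(u',u)`-covariant τ-map `T : E → F` is `(u',u)`-covariant in the
crossed-product sense: `T̃(η_t ∘ m^l_t) = u'_t T̃(m)` and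
`T̃(m^r_t) = T̃(m) u_t`, where `m^l_t(s) = m(t⁻¹s)` and
`m^r_t(s) = Δ(t)⁻¹ m(s t⁻¹)` with `Δ` the modular function of `G`. -/
theorem integrated_map_covariance {A B C E F G : Type*}
    [NormedRing A] [StarRing A] [CStarRing A] [PartialOrder A] [StarOrderedRing A]
    [NormedAlgebra ℂ A] [StarModule ℂ A] [CompleteSpace A]
    [NormedRing B] [StarRing B] [CStarRing B] [PartialOrder B] [StarOrderedRing B]
    [NormedAlgebra ℂ B] [StarModule ℂ B] [CompleteSpace B]
    [NormedRing C] [StarRing C] [CStarRing C] [PartialOrder C] [StarOrderedRing C]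
    [NormedAlgebra ℂ C] [StarModule ℂ C] [CompleteSpace C]
    [NormedAddCommGroup E] [NormedSpace ℂ E] [CompleteSpace E]
    [NormedAddCommGroup F] [NormedSpace ℂ F] [CompleteSpace F]
    [Group G] [TopologicalSpace G] [IsTopologicalGroup G] [LocallyCompactSpace G]
    [MeasurableSpace G] [BorelSpace G]
    (μ : Measure G) [μ.IsHaarMeasure]
    (hE : PreHilbertMod A E)
    (hnormE : ∀ x : E, ‖x‖ ^ 2 = ‖hE.inner x x‖)
    (hfull : Dense ((Submodule.span ℂ
      {a : A | ∃ x y : E, a = hE.inner x y} : Submodule ℂ A) : Set A))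
    (hF : PreHilbertMod B F)
    (hnormF : ∀ z : F, ‖z‖ ^ 2 = ‖hF.inner z z‖)
    (lact : C → F → F)
    (hlact_one : ∀ z : F, lact 1 z = z)
    (hlact_mul : ∀ (c d : C) (z : F), lact (c * d) z = lact c (lact d z))
    (hlact_adj : ∀ (c : C) (z z' : F),
      hF.inner (lact c z) z' = hF.inner z (lact (star c) z'))
    (hlact_lin : ∀ c : C, IsBoundedLinearMap ℂ (lact c))
    (η : G → E → E)
    (hη_one : ∀ x : E, η 1 x = x)
    (hη_mul : ∀ (s t : G) (x : E), η (s * t) x = η s (η t x))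
    (hη_cont : Continuous fun p : G × E => η p.1 p.2)
    (α : G → A → A)
    (hα_one : ∀ a : A, α 1 a = a)
    (hα_grp : ∀ (s t : G) (a : A), α (s * t) a = α s (α t a))
    (hα : ∀ (t : G) (x y : E), α t (hE.inner x y) = hE.inner (η t x) (η t y))
    (hηmod : ∀ (t : G) (x : E) (a : A), η t (hE.smul x a) = hE.smul (η t x) (α t a))
    (u : G → B)
    (hu_unit : ∀ t : G, u t * star (u t) = 1 ∧ star (u t) * u t = 1)
    (hu_one : u 1 = 1) (hu_mul : ∀ s t : G, u (s * t) = u s * u t)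
    (hu_cont : Continuous u)
    (u' : G → C)
    (hu'_unit : ∀ t : G, u' t * star (u' t) = 1 ∧ star (u' t) * u' t = 1)
    (hu'_one : u' 1 = 1) (hu'_mul : ∀ s t : G, u' (s * t) = u' s * u' t)
    (hu'_cont : Continuous u')
    (τ : A →ₗ[ℂ] B) (hτ_cont : Continuous τ)
    (hcp : ∀ (n : ℕ) (a : Fin n → A) (b : Fin n → B),
      0 ≤ ∑ j, ∑ i, star (b j) * τ (star (a j) * a i) * b i)
    (T : E → F) (hT_cont : Continuous T)
    (hT : ∀ x y : E, hF.inner (T x) (T y) = τ (hE.inner x y))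
    (hTcov : ∀ (t : G) (x : E),
      T (η t x) = lact (u' t) (hF.smul (T x) (star (u t))))
    (hT_lin : IsLinearMap ℂ T)
    (hsmul_cont : Continuous fun p : F × B => hF.smul p.1 p.2)
    -- the modular function `Δ` of `G`
    (Δ : G → ℝ) (hΔ_pos : ∀ t : G, 0 < Δ t)
    (hΔ : ∀ (f : G → F) (t : G), Integrable f μ →
      ∫ s, f (s * t) ∂μ = ((Δ t : ℂ))⁻¹ • ∫ s, f s ∂μ) :
    ∀ (m : G → E), Continuous m → HasCompactSupport m → ∀ t : G,
      -- `T̃(η_t ∘ m^l_t) = u'_t T̃(m)`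
      ((∫ s, hF.smul (T (η t (m (t⁻¹ * s)))) (u s) ∂μ) =
        lact (u' t) (∫ s, hF.smul (T (m s)) (u s) ∂μ)) ∧
      -- `T̃(m^r_t) = T̃(m) u_t`
      ((∫ s, hF.smul (T (((Δ t : ℂ))⁻¹ • m (s * t⁻¹))) (u s) ∂μ) =
        hF.smul (∫ s, hF.smul (T (m s)) (u s) ∂μ) (u t)) := by

  intro m hm_cont hm_supp t
  have hTz : T 0 = 0 := hT_lin.mk' T |>.map_zero
  have hsmul0 : ∀ b : B, hF.smul 0 b = 0 := by
    intro b
    have h := hF.smulC_left 0 0 b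
    simpa using h
  -- lact commutes with right smul
  have lact_smul_comm : ∀ (c : C) (z : F) (b : B),
      hF.smul (lact c z) b = lact c (hF.smul z b) := by
    intro c z b
    have adj' : ∀ (w y : F), hF.inner w (lact c y) = hF.inner (lact (star c) w) y := by
      intro w y
      rw [hF.inner_conj, hlact_adj, ← hF.inner_conj]
    have key : ∀ w, hF.inner w (hF.smul (lact c z) b) =
        hF.inner w (lact c (hF.smul z b)) := by
      intro w
      calc hF.inner w (hF.smul (lact c z) b) = hF.inner w (lact c z) * b :=
            hF.inner_smul_right _ _ _
        _ = hF.inner (lact (star c) w) z * b := by rw [adj']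
        _ = hF.inner (lact (star c) w) (hF.smul z b) := (hF.inner_smul_right _ _ _).symm
        _ = hF.inner w (lact c (hF.smul z b)) := (adj' _ _).symm
    set X := hF.smul (lact c z) b
    set Y := lact c (hF.smul z b)
    have hXY : ∀ w, hF.inner w (X - Y) = 0 := by
      intro w
      have : X - Y = X + (-1 : ℂ) • Y := by
        rw [neg_one_smul]; abel
      rw [this, hF.inner_add_right, hF.inner_smulC_right, key, neg_one_smul]
      abel
    have : X - Y = 0 := hF.inner_definite _ (hXY (X - Y))
    exact sub_eq_zero.mp this
  -- integrability of the basic integrand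
  have hcomp : ∀ (m' : G → E), Continuous m' → HasCompactSupport m' →
      Integrable (fun s => hF.smul (T (m' s)) (u s)) μ := by
    intro m' hc hs
    have hcont : Continuous fun s => hF.smul (T (m' s)) (u s) :=
      hsmul_cont.comp (((hT_cont.comp hc).prodMk hu_cont))
    have h1 : HasCompactSupport (T ∘ m') := hs.comp_left hTz
    have h2 : HasCompactSupport fun s => hF.smul (T (m' s)) (u s) := by
      apply h1.mono
      intro s hs'
      simp only [Function.mem_support, Function.comp_apply] at *
      intro h0
      exact hs' (by rw [h0, hsmul0])
    exact hcont.integrable_of_hasCompactSupport h2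
  have hIntm : Integrable (fun s => hF.smul (T (m s)) (u s)) μ := hcomp m hm_cont hm_supp
  constructor
  · -- first identity
    have hptwise : ∀ s : G, hF.smul (T (η t (m (t⁻¹ * s)))) (u s) =
        (fun σ => lact (u' t) (hF.smul (T (m σ)) (star (u t) * u (t * σ)))) (t⁻¹ * s) := by
      intro s
      simp only [mul_inv_cancel_left]
      rw [hTcov, lact_smul_comm, hF.smul_smul]
    calc (∫ s, hF.smul (T (η t (m (t⁻¹ * s)))) (u s) ∂μ)
        = ∫ s, (fun σ => lact (u' t)
            (hF.smul (T (m σ)) (star (u t) * u (t * σ)))) (t⁻¹ * s) ∂μ := by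
          exact integral_congr_ae (Filter.Eventually.of_forall hptwise)
      _ = ∫ σ, lact (u' t) (hF.smul (T (m σ)) (star (u t) * u (t * σ))) ∂μ := by
          exact integral_mul_left_eq_self (μ := μ)
            (fun σ => lact (u' t) (hF.smul (T (m σ)) (star (u t) * u (t * σ)))) t⁻¹
      _ = ∫ σ, lact (u' t) (hF.smul (T (m σ)) (u σ)) ∂μ := by
          apply integral_congr_ae (Filter.Eventually.of_forall _)
          intro σ
          rw [hu_mul, ← mul_assoc, (hu_unit t).2, one_mul]
      _ = lact (u' t) (∫ s, hF.smul (T (m s)) (u s) ∂μ) := by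
          exact (hlact_lin (u' t)).toContinuousLinearMap.integral_comp_comm hIntm
  · -- second identity
    set f : G → F := fun s => hF.smul (T (m (s * t⁻¹))) (u s) with hf_def
    have hf_int : Integrable f μ := by
      apply hcomp
      · exact hm_cont.comp (continuous_mul_right t⁻¹)
      · exact hm_supp.comp_homeomorph (Homeomorph.mulRight t⁻¹)
    have hR : ∃ R : F →L[ℂ] F, ∀ z, R z = hF.smul z (u t) := by
      refine ⟨⟨⟨⟨fun z => hF.smul z (u t), ?_⟩, ?_⟩, ?_⟩, fun z => rfl⟩
      · intro x y; exact hF.add_smul_left x y (u t)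
      · intro c x; exact hF.smulC_left c x (u t)
      · exact hsmul_cont.comp (continuous_id.prodMk continuous_const)
    obtain ⟨R, hR⟩ := hR
    have hΔf := hΔ f t hf_int
    have hfst : ∀ s : G, f (s * t) = hF.smul (T (m s)) (u (s * t)) := by
      intro s
      simp only [hf_def, mul_inv_cancel_right]
    calc (∫ s, hF.smul (T (((Δ t : ℂ))⁻¹ • m (s * t⁻¹))) (u s) ∂μ)
        = ∫ s, ((Δ t : ℂ))⁻¹ • f s ∂μ := by
          apply integral_congr_ae (Filter.Eventually.of_forall _)
          intro s
          rw [hf_def]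
          rw [hT_lin.map_smul, hF.smulC_left]
      _ = ((Δ t : ℂ))⁻¹ • ∫ s, f s ∂μ := integral_smul _ _
      _ = ∫ s, f (s * t) ∂μ := hΔf.symm
      _ = ∫ s, R (hF.smul (T (m s)) (u s)) ∂μ := by
          apply integral_congr_ae (Filter.Eventually.of_forall _)
          intro s
          rw [hfst, hR, hF.smul_smul, hu_mul]
      _ = hF.smul (∫ s, hF.smul (T (m s)) (u s) ∂μ) (u t) := by
          rw [R.integral_comp_comm hIntm, hR]
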